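/- Let M be a positively ordered semigroup. If M is nearly separative (i.e., M is preminimal and 2x ≤ x + y ≤ 2y implies x ≤ y), then whenever x + z ≤ y + z with z in both the order ideal generated by x and the order ideal generated by y, it follows that x ≤ y. -/

import Mathlib

def idealGen {M : Type*} [AddCommMonoid M] [PartialOrder M] (x : M) : Set M :=
  {z : M | ∃ n : ℕ, z ≤ n • x}

/-- `M` is preminimal: `x + v ≤ y + v` and `v ≤ w` imply `x + w ≤ y + w`. -/
def Preminimal (M : Type*) [AddCommMonoid M] [PartialOrder M] : Prop :=
  ∀ x y v w : M, x + v ≤ y + v → v ≤ w → x + w ≤ y + w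

/-- `M` is nearly separative: preminimal and `2x ≤ x + y ≤ 2y` implies `x ≤ y`. -/
def NearlySeparative (M : Type*) [AddCommMonoid M] [PartialOrder M] : Prop :=
  Preminimal M ∧ ∀ x y : M, 2 • x ≤ x + y → x + y ≤ 2 • y → x ≤ y

section Aux
variable {M : Type*} [AddCommMonoid M] [PartialOrder M]
    [CovariantClass M M (· + ·) (· ≤ ·)]

lemma aux_le_add (hpos : ∀ x : M, 0 ≤ x) (a b : M) : a ≤ b + a := by
  calc a = 0 + a := (zero_add _).symm
    _ ≤ b + a := by
        rw [add_comm b a, add_comm (0:M) a]; exact add_le_add_right (hpos _) _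

lemma stepA (hpre : Preminimal M)
    (hns : ∀ x y : M, 2 • x ≤ x + y → x + y ≤ 2 • y → x ≤ y)
    (hpos : ∀ x : M, 0 ≤ x) (a b c : M)
    (h : a + (c + a + a) ≤ b + (c + a + a)) :
    a + (c + a) ≤ b + (c + a) := by
  have h1 : 2 • (c + a + a) ≤ (c + a + a) + (b + (c + a)) := by
    have hvw : c + a + a ≤ c + c + a + a + a :=
      le_trans (aux_le_add hpos _ (c + a)) (le_of_eq (by abel))
    have := hpre a b (c + a + a) (c + c + a + a + a) h hvw
    calc 2 • (c + a + a) = a + (c + c + a + a + a) := by abel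
      _ ≤ b + (c + c + a + a + a) := this
      _ = (c + a + a) + (b + (c + a)) := by abel
  have h2 : (c + a + a) + (b + (c + a)) ≤ 2 • (b + (c + a)) := by
    have hvw : c + a + a ≤ b + c + c + a + a :=
      le_trans (aux_le_add hpos _ (b + c)) (le_of_eq (by abel))
    have := hpre a b (c + a + a) (b + c + c + a + a) h hvw
    calc (c + a + a) + (b + (c + a)) = a + (b + c + c + a + a) := by abel
      _ ≤ b + (b + c + c + a + a) := this
      _ = 2 • (b + (c + a)) := by abel
  have := hns (c + a + a) (b + (c + a)) h1 h2
  calc a + (c + a) = c + a + a := by abel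
    _ ≤ b + (c + a) := this

lemma stepB (hpre : Preminimal M)
    (hns : ∀ x y : M, 2 • x ≤ x + y → x + y ≤ 2 • y → x ≤ y)
    (hpos : ∀ x : M, 0 ≤ x) (a b c : M)
    (h : a + (c + b + b) ≤ b + (c + b + b)) :
    a + (c + b) ≤ b + (c + b) := by
  have h1 : 2 • (a + (c + b)) ≤ (a + (c + b)) + (c + b + b) := by
    have hvw : c + b + b ≤ a + c + c + b + b :=
      le_trans (aux_le_add hpos _ (a + c)) (le_of_eq (by abel))
    have := hpre a b (c + b + b) (a + c + c + b + b) h hvw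
    calc 2 • (a + (c + b)) = a + (a + c + c + b + b) := by abel
      _ ≤ b + (a + c + c + b + b) := this
      _ = (a + (c + b)) + (c + b + b) := by abel
  have h2 : (a + (c + b)) + (c + b + b) ≤ 2 • (c + b + b) := by
    have hvw : c + b + b ≤ c + c + b + b + b :=
      le_trans (aux_le_add hpos _ (c + b)) (le_of_eq (by abel))
    have := hpre a b (c + b + b) (c + c + b + b + b) h hvw
    calc (a + (c + b)) + (c + b + b) = a + (c + c + b + b + b) := by abel
      _ ≤ b + (c + c + b + b + b) := this
      _ = 2 • (c + b + b) := by abel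
  have := hns (a + (c + b)) (c + b + b) h1 h2
  calc a + (c + b) ≤ c + b + b := this
    _ = b + (c + b) := by abel

lemma descA (hpre : Preminimal M)
    (hns : ∀ x y : M, 2 • x ≤ x + y → x + y ≤ 2 • y → x ≤ y)
    (hpos : ∀ x : M, 0 ≤ x) (a b : M) :
    ∀ k : ℕ, a + (k + 1) • a ≤ b + (k + 1) • a → a + (0 + 1) • a ≤ b + (0 + 1) • a := by
  intro k
  induction k with
  | zero => exact fun h => h
  | succ k ih =>
    intro h
    apply ih
    rw [succ_nsmul a (k+1), succ_nsmul a k] at h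
    rw [succ_nsmul a k]
    exact stepA hpre hns hpos a b (k • a) h

lemma descB (hpre : Preminimal M)
    (hns : ∀ x y : M, 2 • x ≤ x + y → x + y ≤ 2 • y → x ≤ y)
    (hpos : ∀ x : M, 0 ≤ x) (a b : M) :
    ∀ k : ℕ, a + (k + 1) • b ≤ b + (k + 1) • b → a + (0 + 1) • b ≤ b + (0 + 1) • b := by
  intro k
  induction k with
  | zero => exact fun h => h
  | succ k ih =>
    intro h
    apply ih
    rw [succ_nsmul b (k+1), succ_nsmul b k] at h
    rw [succ_nsmul b k]
    exact stepB hpre hns hpos a b (k • b) h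

end Aux

theorem stmt_1 {M : Type*} [AddCommMonoid M] [PartialOrder M]
    [CovariantClass M M (· + ·) (· ≤ ·)]
    (hpos : ∀ x : M, 0 ≤ x) (hns : NearlySeparative M)
    (x y z : M) (h : x + z ≤ y + z)
    (hzx : z ∈ idealGen x) (hzy : z ∈ idealGen y) :
    x ≤ y := by
  obtain ⟨hpre, hsep⟩ := hns
  obtain ⟨n, hn⟩ := hzx
  obtain ⟨m, hm⟩ := hzy
  rcases Nat.eq_zero_or_pos n with rfl | hnpos
  · have hz0 : z = 0 := le_antisymm (by simpa using hn) (hpos z)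
    subst hz0
    simpa using h
  rcases Nat.eq_zero_or_pos m with rfl | hmpos
  · have hz0 : z = 0 := le_antisymm (by simpa using hm) (hpos z)
    subst hz0
    simpa using h
  obtain ⟨k, rfl⟩ : ∃ k, n = k + 1 := ⟨n - 1, by omega⟩
  obtain ⟨l, rfl⟩ : ∃ l, m = l + 1 := ⟨m - 1, by omega⟩
  have hA : x + (k+1) • x ≤ y + (k+1) • x := hpre x y z ((k+1) • x) h hn
  have hB : x + (l+1) • y ≤ y + (l+1) • y := hpre x y z ((l+1) • y) h hm
  have hA1 := descA hpre hsep hpos x y k hA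
  have hB1 := descB hpre hsep hpos x y l hB
  simp only [zero_add, one_nsmul] at hA1 hB1
  apply hsep x y
  · calc 2 • x = x + x := two_nsmul x
      _ ≤ y + x := hA1
      _ = x + y := add_comm y x
  · calc x + y ≤ y + y := hB1
      _ = 2 • y := (two_nsmul y).symm
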